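/- Let P be a connected commutative algebraic group over a finite field F_q. Then H¹(Gal(F̄_q/F_q), P(F̄_q)) = 0 (Lang's theorem), and moreover for every r ≥ 1, H¹(Gal(F_{q^r}/F_q), P(F_{q^r})) = 0. -/

import Mathlib

/-- Lang's theorem, cohomological form: let `A` be the group of `F̄_q`-points of a connected
commutative algebraic group, with Frobenius `σ`, so that the Lang map `x ↦ σ(x) - x` is
surjective. Then `H¹(Gal(F̄_q/F_q), A) = 0` and, at every finite level `r ≥ 1`,
`H¹(Gal(F_{q^r}/F_q), A^{σ^r}) = 0`: every 1-cocycle of the cyclic group `ℤ/r` with values in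
the `σ^r`-fixed points is a 1-coboundary. -/
theorem stmt_12 {A : Type} [AddCommGroup A] (σ : AddAut A)
    (hLang : ∀ a : A, ∃ b : A, σ b - b = a) :
    ∀ r : ℕ, 0 < r → ∀ f : ZMod r → A,
      (∀ i : ZMod r, (r • σ) (f i) = f i) →
      (∀ i j : ZMod r, f (i + j) = f i + (i.val • σ) (f j)) →
      ∃ b : A, (r • σ) b = b ∧ ∀ i : ZMod r, f i = (i.val • σ) b - b := by
  intro r hr f hfix hcoc
  haveI : NeZero r := ⟨hr.ne'⟩
  obtain ⟨b, hb⟩ := hLang (f 1)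
  have hf0 : f 0 = 0 := by
    have h := hcoc 0 0
    simpa using h
  have hfixpow : ∀ m : ℕ, (m • (r • σ)) (f 1) = f 1 := by
    intro m
    induction m with
    | zero => simp
    | succ m ih => rw [succ_nsmul, AddAut.add_apply, hfix 1, ih]
  have hmod : ∀ n : ℕ, (n • σ) (f 1) = ((n % r) • σ) (f 1) := by
    intro n
    conv_lhs => rw [← Nat.mod_add_div n r, add_nsmul, AddAut.add_apply, mul_nsmul,
      hfixpow (n / r)]
  have claim2 : ∀ n : ℕ, f (n : ZMod r) = ∑ k ∈ Finset.range n, (k • σ) (f 1) := by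
    intro n
    induction n with
    | zero => simpa using hf0
    | succ n ih =>
      have h : f ((n : ZMod r) + 1) = f (n : ZMod r) + (((n : ZMod r)).val • σ) (f 1) :=
        hcoc (n : ZMod r) 1
      rw [Nat.cast_succ, h, ih, Finset.sum_range_succ, ZMod.val_natCast, ← hmod n]
  have claim1 : ∀ n : ℕ, (n • σ) b - b = ∑ k ∈ Finset.range n, (k • σ) (f 1) := by
    intro n
    induction n with
    | zero => simp
    | succ n ih =>
      rw [Finset.sum_range_succ, ← ih, succ_nsmul, AddAut.add_apply]
      have : (n • σ) (σ b) - (n • σ) b = (n • σ) (σ b - b) := by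
        simp [map_sub]
      rw [show (n • σ) (σ b) - b = ((n • σ) (σ b) - (n • σ) b) + ((n • σ) b - b) by abel,
        this, hb]
      abel
  refine ⟨b, ?_, ?_⟩
  · have h : (r • σ) b - b = f ((r : ℕ) : ZMod r) := by rw [claim1, claim2]
    rw [ZMod.natCast_self, hf0] at h
    exact sub_eq_zero.mp h
  · intro i
    have h := claim2 i.val
    rw [ZMod.natCast_val, ZMod.cast_id] at h
    rw [h, claim1]
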